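/- In ⊗³ 𝕂⁶, the sequence of tensors y_n := n(e₁ + (1/n)e₄) ∨ (e₂ + (1/n)e₅) ∨ (e₃ + (1/n)e₆) − n·e₁ ∨ e₂ ∨ e₃, each of symmetric decomposable rank at most 2, converges (in any norm on the finite-dimensional space ⊗³ 𝕂⁶) to y := e₁ ∨ e₂ ∨ e₆ + e₁ ∨ e₃ ∨ e₅ + e₂ ∨ e₃ ∨ e₄; explicitly, y_n − y = (1/n)(e₃ ∨ e₄ ∨ e₅ + e₂ ∨ e₄ ∨ e₆ + e₁ ∨ e₅ ∨ e₆) + (1/n²) e₄ ∨ e₅ ∨ e₆. -/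

import Mathlib

open scoped BigOperators

/-- The linear map permuting tensor factors: `(permLin η z) j = z (j ∘ η)`. -/
noncomputable def permLin (𝕜 : Type*) [RCLike 𝕜] (d n : ℕ) (η : Equiv.Perm (Fin d)) :
    EuclideanSpace 𝕜 (Fin d → Fin n) →ₗ[𝕜] EuclideanSpace 𝕜 (Fin d → Fin n) where
  toFun z := WithLp.toLp 2 (fun j => z (j ∘ η))
  map_add' _ _ := rfl
  map_smul' _ _ := rfl

/-- A tensor is symmetric if it is invariant under all permutations of factors. -/
def IsSymTensor {𝕜 : Type*} [RCLike 𝕜] {d n : ℕ}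
    (z : EuclideanSpace 𝕜 (Fin d → Fin n)) : Prop :=
  ∀ η : Equiv.Perm (Fin d), permLin 𝕜 d n η z = z

/-- The elementary tensor `x 1 ⊗ ⋯ ⊗ x d`. -/
noncomputable def eTensor {𝕜 : Type*} [RCLike 𝕜] {d n : ℕ}
    (x : Fin d → EuclideanSpace 𝕜 (Fin n)) : EuclideanSpace 𝕜 (Fin d → Fin n) :=
  WithLp.toLp 2 (fun (j : Fin d → Fin n) => ∏ i, x i (j i))

/-- The symmetrization operator `σ`. -/
noncomputable def symmetrize {𝕜 : Type*} [RCLike 𝕜] {d n : ℕ}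
    (z : EuclideanSpace 𝕜 (Fin d → Fin n)) : EuclideanSpace 𝕜 (Fin d → Fin n) :=
  ((d.factorial : 𝕜)⁻¹) • ∑ η : Equiv.Perm (Fin d), permLin 𝕜 d n η z

/-- The decomposable symmetric tensor `x 1 ∨ ⋯ ∨ x d`. -/
noncomputable def vee {𝕜 : Type*} [RCLike 𝕜] {d n : ℕ}
    (x : Fin d → EuclideanSpace 𝕜 (Fin n)) : EuclideanSpace 𝕜 (Fin d → Fin n) :=
  symmetrize (eTensor x)

/-- The tensor rank. -/
noncomputable def tensorRank {𝕜 : Type*} [RCLike 𝕜] {d n : ℕ}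
    (z : EuclideanSpace 𝕜 (Fin d → Fin n)) : ℕ :=
  sInf {r : ℕ | ∃ v : Fin r → Fin d → EuclideanSpace 𝕜 (Fin n), z = ∑ i, eTensor (v i)}

/-- The symmetric decomposable rank. -/
noncomputable def symDecRank {𝕜 : Type*} [RCLike 𝕜] {d n : ℕ}
    (z : EuclideanSpace 𝕜 (Fin d → Fin n)) : ℕ :=
  sInf {r : ℕ | ∃ v : Fin r → Fin d → EuclideanSpace 𝕜 (Fin n), z = ∑ i, vee (v i)}

/-- The injective (spectral) norm. -/
noncomputable def injNorm {𝕜 : Type*} [RCLike 𝕜] {d n : ℕ}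
    (z : EuclideanSpace 𝕜 (Fin d → Fin n)) : ℝ :=
  sSup {c : ℝ | ∃ y : Fin d → EuclideanSpace 𝕜 (Fin n),
    (∀ i, ‖y i‖ = 1) ∧ c = ‖(inner 𝕜 (eTensor y) z : 𝕜)‖}

/-- The projective (nuclear) norm. -/
noncomputable def projNorm {𝕜 : Type*} [RCLike 𝕜] {d n : ℕ}
    (z : EuclideanSpace 𝕜 (Fin d → Fin n)) : ℝ :=
  sInf {c : ℝ | ∃ (r : ℕ) (v : Fin r → Fin d → EuclideanSpace 𝕜 (Fin n)),
    z = ∑ i, eTensor (v i) ∧ c = ∑ i, ∏ j, ‖v i j‖}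

section Aux2
variable {𝕜 : Type*} [RCLike 𝕜] {d n : ℕ}

lemma permLin_permLin (σ η : Equiv.Perm (Fin d)) (z : EuclideanSpace 𝕜 (Fin d → Fin n)) :
    permLin 𝕜 d n σ (permLin 𝕜 d n η z) = permLin 𝕜 d n (σ * η) z := rfl

lemma symmetrize_permLin (η : Equiv.Perm (Fin d)) (z : EuclideanSpace 𝕜 (Fin d → Fin n)) :
    symmetrize (permLin 𝕜 d n η z) = symmetrize z := by
  unfold symmetrize
  congr 1
  rw [Finset.sum_congr rfl (fun σ _ => permLin_permLin σ η z)]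
  exact Fintype.sum_equiv (Equiv.mulRight η) _ _ (fun σ => rfl)

lemma eTensor_comp (x : Fin d → EuclideanSpace 𝕜 (Fin n)) (η : Equiv.Perm (Fin d)) :
    eTensor (x ∘ η) = permLin 𝕜 d n η⁻¹ (eTensor x) := by
  refine PiLp.ext fun j => ?_
  show (∏ i, x (η i) (j i)) = ∏ i, x i (j (η⁻¹ i))
  rw [← Equiv.prod_comp η (fun i => x i (j (η⁻¹ i)))]
  refine Finset.prod_congr rfl fun i _ => ?_
  rw [← Equiv.Perm.mul_apply, inv_mul_cancel, Equiv.Perm.one_apply]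

lemma vee_comp (x : Fin d → EuclideanSpace 𝕜 (Fin n)) (η : Equiv.Perm (Fin d)) :
    vee (x ∘ η) = vee x := by
  unfold vee
  rw [eTensor_comp, symmetrize_permLin]

lemma symmetrize_add (z w : EuclideanSpace 𝕜 (Fin d → Fin n)) :
    symmetrize (z + w) = symmetrize z + symmetrize w := by
  unfold symmetrize
  simp [map_add, Finset.sum_add_distrib, smul_add]

lemma symmetrize_smul (c : 𝕜) (z : EuclideanSpace 𝕜 (Fin d → Fin n)) :
    symmetrize (c • z) = c • symmetrize z := by
  unfold symmetrize
  simp only [map_smul, ← Finset.smul_sum]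
  rw [smul_comm]

lemma eTensor_add1 (a a' b c : EuclideanSpace 𝕜 (Fin n)) :
    eTensor ![a + a', b, c] = eTensor ![a, b, c] + eTensor ![a', b, c] := by
  refine PiLp.ext fun j => ?_
  simp [eTensor, Fin.prod_univ_three, PiLp.add_apply]
  ring

lemma eTensor_smul1 (t : 𝕜) (a b c : EuclideanSpace 𝕜 (Fin n)) :
    eTensor ![t • a, b, c] = t • eTensor ![a, b, c] := by
  refine PiLp.ext fun j => ?_
  simp [eTensor, Fin.prod_univ_three, PiLp.smul_apply, smul_eq_mul]
  ring

lemma vee_add1 (a a' b c : EuclideanSpace 𝕜 (Fin n)) :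
    vee ![a + a', b, c] = vee ![a, b, c] + vee ![a', b, c] := by
  unfold vee; rw [eTensor_add1, symmetrize_add]

lemma vee_smul1 (t : 𝕜) (a b c : EuclideanSpace 𝕜 (Fin n)) :
    vee ![t • a, b, c] = t • vee ![a, b, c] := by
  unfold vee; rw [eTensor_smul1, symmetrize_smul]

lemma vee_swap01 (a b c : EuclideanSpace 𝕜 (Fin n)) : vee ![b, a, c] = vee ![a, b, c] := by
  have h : ![b, a, c] = ![a, b, c] ∘ ⇑(Equiv.swap (0 : Fin 3) 1) := by
    funext i; fin_cases i <;> simp [Equiv.swap_apply_def]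
  rw [h, vee_comp]

lemma vee_swap12 (a b c : EuclideanSpace 𝕜 (Fin n)) : vee ![a, c, b] = vee ![a, b, c] := by
  have h : ![a, c, b] = ![a, b, c] ∘ ⇑(Equiv.swap (1 : Fin 3) 2) := by
    funext i; fin_cases i <;> simp [Equiv.swap_apply_def]
  rw [h, vee_comp]

lemma vee_add2 (a b b' c : EuclideanSpace 𝕜 (Fin n)) :
    vee ![a, b + b', c] = vee ![a, b, c] + vee ![a, b', c] := by
  calc vee ![a, b + b', c] = vee ![b + b', a, c] := vee_swap01 (b + b') a c
    _ = vee ![b, a, c] + vee ![b', a, c] := vee_add1 b b' a c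
    _ = vee ![a, b, c] + vee ![a, b', c] := by rw [← vee_swap01 b a c, ← vee_swap01 b' a c]

lemma vee_smul2 (t : 𝕜) (a b c : EuclideanSpace 𝕜 (Fin n)) :
    vee ![a, t • b, c] = t • vee ![a, b, c] := by
  calc vee ![a, t • b, c] = vee ![t • b, a, c] := vee_swap01 (t • b) a c
    _ = t • vee ![b, a, c] := vee_smul1 t b a c
    _ = t • vee ![a, b, c] := by rw [← vee_swap01 b a c]

lemma vee_add3 (a b c c' : EuclideanSpace 𝕜 (Fin n)) :
    vee ![a, b, c + c'] = vee ![a, b, c] + vee ![a, b, c'] := by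
  calc vee ![a, b, c + c'] = vee ![a, c + c', b] := vee_swap12 a (c + c') b
    _ = vee ![a, c, b] + vee ![a, c', b] := vee_add2 a c c' b
    _ = vee ![a, b, c] + vee ![a, b, c'] := by rw [← vee_swap12 a c b, ← vee_swap12 a c' b]

lemma vee_smul3 (t : 𝕜) (a b c : EuclideanSpace 𝕜 (Fin n)) :
    vee ![a, b, t • c] = t • vee ![a, b, c] := by
  calc vee ![a, b, t • c] = vee ![a, t • c, b] := vee_swap12 a (t • c) b
    _ = t • vee ![a, c, b] := vee_smul2 t a c b
    _ = t • vee ![a, b, c] := by rw [← vee_swap12 a c b]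

lemma vee_expand (t : 𝕜) (a a' b b' c c' : EuclideanSpace 𝕜 (Fin n)) :
    vee ![a + t • a', b + t • b', c + t • c'] =
      vee ![a, b, c]
      + t • (vee ![a', b, c] + vee ![a, b', c] + vee ![a, b, c'])
      + (t * t) • (vee ![a', b', c] + vee ![a', b, c'] + vee ![a, b', c'])
      + (t * t * t) • vee ![a', b', c'] := by
  rw [vee_add1, vee_smul1, vee_add2, vee_add2, vee_smul2, vee_smul2, vee_add3, vee_add3,
    vee_add3, vee_add3, vee_smul3, vee_smul3, vee_smul3, vee_smul3]
  module



open Filter Topology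

theorem key_main {𝕜 : Type*} [RCLike 𝕜] (e : Fin 6 → EuclideanSpace 𝕜 (Fin 6)) :
    (∀ m : ℕ, ∃ a b : Fin 3 → EuclideanSpace 𝕜 (Fin 6),
      (m : 𝕜) • vee ![e 0 + ((m : 𝕜))⁻¹ • e 3, e 1 + ((m : 𝕜))⁻¹ • e 4, e 2 + ((m : 𝕜))⁻¹ • e 5]
        - (m : 𝕜) • vee ![e 0, e 1, e 2] = vee a + vee b) ∧
    (∀ m : ℕ, 1 ≤ m →
      (m : 𝕜) • vee ![e 0 + ((m : 𝕜))⁻¹ • e 3, e 1 + ((m : 𝕜))⁻¹ • e 4, e 2 + ((m : 𝕜))⁻¹ • e 5]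
        - (m : 𝕜) • vee ![e 0, e 1, e 2]
        - (vee ![e 0, e 1, e 5] + vee ![e 0, e 2, e 4] + vee ![e 1, e 2, e 3])
        = ((m : 𝕜))⁻¹ • (vee ![e 2, e 3, e 4] + vee ![e 1, e 3, e 5] + vee ![e 0, e 4, e 5])
          + (((m : 𝕜)) ^ 2)⁻¹ • vee ![e 3, e 4, e 5]) ∧
    Tendsto (fun m : ℕ =>
        (m : 𝕜) • vee ![e 0 + ((m : 𝕜))⁻¹ • e 3, e 1 + ((m : 𝕜))⁻¹ • e 4, e 2 + ((m : 𝕜))⁻¹ • e 5]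
        - (m : 𝕜) • vee ![e 0, e 1, e 2]) atTop
      (𝓝 (vee ![e 0, e 1, e 5] + vee ![e 0, e 2, e 4] + vee ![e 1, e 2, e 3])) := by
  have h2 : ∀ m : ℕ, 1 ≤ m →
      (m : 𝕜) • vee ![e 0 + ((m : 𝕜))⁻¹ • e 3, e 1 + ((m : 𝕜))⁻¹ • e 4, e 2 + ((m : 𝕜))⁻¹ • e 5]
        - (m : 𝕜) • vee ![e 0, e 1, e 2]
        - (vee ![e 0, e 1, e 5] + vee ![e 0, e 2, e 4] + vee ![e 1, e 2, e 3])
        = ((m : 𝕜))⁻¹ • (vee ![e 2, e 3, e 4] + vee ![e 1, e 3, e 5] + vee ![e 0, e 4, e 5])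
          + (((m : 𝕜)) ^ 2)⁻¹ • vee ![e 3, e 4, e 5] := by
    intro m hm
    have hm0 : ((m : 𝕜)) ≠ 0 := Nat.cast_ne_zero.2 (by omega)
    have h1 : vee ![e 3, e 1, e 2] = vee ![e 1, e 2, e 3] :=
      (vee_swap01 (e 1) (e 3) (e 2)).trans (vee_swap12 (e 1) (e 2) (e 3))
    have hb : vee ![e 0, e 4, e 2] = vee ![e 0, e 2, e 4] := vee_swap12 (e 0) (e 2) (e 4)
    have hc : vee ![e 3, e 1, e 5] = vee ![e 1, e 3, e 5] := vee_swap01 (e 1) (e 3) (e 5)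
    have hd : vee ![e 3, e 4, e 2] = vee ![e 2, e 3, e 4] :=
      (vee_swap12 (e 3) (e 2) (e 4)).trans (vee_swap01 (e 2) (e 3) (e 4))
    rw [vee_expand ((m : 𝕜)⁻¹) (e 0) (e 3) (e 1) (e 4) (e 2) (e 5), h1, hb, hc, hd]
    match_scalars <;> field_simp <;> ring
  refine ⟨?_, h2, ?_⟩
  · intro m
    refine ⟨![(m : 𝕜) • (e 0 + ((m : 𝕜))⁻¹ • e 3), e 1 + ((m : 𝕜))⁻¹ • e 4,
        e 2 + ((m : 𝕜))⁻¹ • e 5], ![(-(m : 𝕜)) • e 0, e 1, e 2], ?_⟩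
    rw [vee_smul1, vee_smul1, neg_smul, sub_eq_add_neg]
  · set w1 := vee ![e 2, e 3, e 4] + vee ![e 1, e 3, e 5] + vee ![e 0, e 4, e 5] with hw1
    set w2 := vee ![e 3, e 4, e 5] with hw2
    set y := vee ![e 0, e 1, e 5] + vee ![e 0, e 2, e 4] + vee ![e 1, e 2, e 3] with hy
    have h0 : Tendsto (fun m : ℕ => ((m : 𝕜))⁻¹) atTop (𝓝 0) :=
      tendsto_inv_atTop_nhds_zero_nat (𝕜 := 𝕜)
    have hb : Tendsto (fun m : ℕ => (((m : 𝕜)) ^ 2)⁻¹) atTop (𝓝 0) := by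
      have := h0.mul h0
      simpa [pow_two, mul_inv] using this
    have h : Tendsto (fun m : ℕ => (((m : 𝕜))⁻¹ • w1 + (((m : 𝕜)) ^ 2)⁻¹ • w2) + y)
        atTop (𝓝 y) := by
      have h' := ((h0.smul_const w1).add (hb.smul_const w2)).add (tendsto_const_nhds (x := y))
      simpa using h'
    refine h.congr' ?_
    filter_upwards [eventually_ge_atTop 1] with m hm
    exact (sub_eq_iff_eq_add.mp (h2 m hm)).symm
end Aux2

open Filter Topology

/-- In `⊗³ 𝕂⁶` the tensors
`yₙ = n(e₁ + (1/n)e₄) ∨ (e₂ + (1/n)e₅) ∨ (e₃ + (1/n)e₆) − n e₁ ∨ e₂ ∨ e₃`, each of symmetric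
decomposable rank at most 2, converge to `y = e₁ ∨ e₂ ∨ e₆ + e₁ ∨ e₃ ∨ e₅ + e₂ ∨ e₃ ∨ e₄`;
explicitly `yₙ − y = (1/n)(e₃∨e₄∨e₅ + e₂∨e₄∨e₆ + e₁∨e₅∨e₆) + (1/n²) e₄∨e₅∨e₆`. -/
theorem symDecRank_two_approx_sequence
    {𝕜 : Type*} [RCLike 𝕜] :
    letI e : Fin 6 → EuclideanSpace 𝕜 (Fin 6) := fun i => EuclideanSpace.single i 1
    letI yseq : ℕ → EuclideanSpace 𝕜 (Fin 3 → Fin 6) := fun m =>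
      (m : 𝕜) • vee ![e 0 + ((m : 𝕜))⁻¹ • e 3, e 1 + ((m : 𝕜))⁻¹ • e 4,
        e 2 + ((m : 𝕜))⁻¹ • e 5] - (m : 𝕜) • vee ![e 0, e 1, e 2]
    letI y : EuclideanSpace 𝕜 (Fin 3 → Fin 6) :=
      vee ![e 0, e 1, e 5] + vee ![e 0, e 2, e 4] + vee ![e 1, e 2, e 3]
    (∀ m : ℕ, ∃ a b : Fin 3 → EuclideanSpace 𝕜 (Fin 6), yseq m = vee a + vee b) ∧
    (∀ m : ℕ, 1 ≤ m →
      yseq m - y = ((m : 𝕜))⁻¹ •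
          (vee ![e 2, e 3, e 4] + vee ![e 1, e 3, e 5] + vee ![e 0, e 4, e 5])
        + (((m : 𝕜)) ^ 2)⁻¹ • vee ![e 3, e 4, e 5]) ∧
    Tendsto yseq atTop (𝓝 y) := by
  exact key_main (fun i => EuclideanSpace.single i 1)
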